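/- arXiv:1406.4345 — 13 statements merged into one kernel-verified Lean document; each statement's English description precedes it below -/
import Mathlib

section
/- Let X be a nonempty set, let n ≥ 1 be an integer, and let F : X^n → X be an n-ary operation with diagonal section δ_F : X → X defined by δ_F(u) = F(u,…,u). Then F is range-idempotent (i.e., δ_F ∘ F = F) if and only if F is quasi-range-idempotent (i.e., ran(δ_F) = ran(F)) and δ_F ∘ δ_F = δ_F. -/
/-- For `F : Xⁿ → X` (n ≥ 1, X nonempty) with diagonal section
`δ_F u = F (u,…,u)`:  `F` is range-idempotent (`δ_F ∘ F = F`) iff `F` is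
quasi-range-idempotent (`ran δ_F = ran F`) and `δ_F ∘ δ_F = δ_F`. -/
theorem stmt_0 {X : Type*} [Nonempty X] (n : ℕ) (hn : 1 ≤ n)
    (F : (Fin n → X) → X) :
    (∀ x : Fin n → X, F (fun _ => F x) = F x) ↔
      (Set.range (fun u : X => F (fun _ => u)) = Set.range F ∧
        ∀ u : X, F (fun _ => F (fun _ : Fin n => u)) = F (fun _ : Fin n => u)) := by
  constructor
  · intro h
    refine ⟨Set.Subset.antisymm ?_ ?_, fun u => h _⟩
    · rintro _ ⟨u, rfl⟩; exact ⟨_, rfl⟩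
    · rintro _ ⟨x, rfl⟩; exact ⟨F x, h x⟩
  · rintro ⟨hr, hd⟩ x
    have : F x ∈ Set.range (fun u : X => F (fun _ => u)) := hr ▸ ⟨x, rfl⟩
    obtain ⟨u, hu⟩ := this
    rw [← hu, hd]
end

section
/- Let X and Y be nonempty sets, let n ≥ 1 be an integer, and let F : X^n → Y be a quasi-range-idempotent function. For any quasi-inverse g of δ_F, the n-ary operation H : X^n → X defined by H = g ∘ F is range-idempotent (δ_H ∘ H = H) and satisfies F = δ_F ∘ H; moreover, the restriction of δ_F to ran(H) is injective. -/
/-- `g` is a quasi-inverse of `f`: `f (g b) = b` for every `b ∈ ran f`, and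
`g (ran f) = ran g`. -/
def QuasiInv {α β : Type*} (f : α → β) (g : β → α) : Prop :=
  (∀ b ∈ Set.range f, f (g b) = b) ∧ g '' Set.range f = Set.range g

/-- If `F : Xⁿ → Y` (n ≥ 1) is quasi-range-idempotent and `g` is a
quasi-inverse of `δ_F`, then `H = g ∘ F` is range-idempotent (`δ_H ∘ H = H`),
satisfies `F = δ_F ∘ H`, and `δ_F` restricted to `ran H` is injective. -/
theorem stmt_1 {X Y : Type*} [Nonempty X] [Nonempty Y] (n : ℕ) (hn : 1 ≤ n)
    (F : (Fin n → X) → Y)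
    (hqri : Set.range (fun u : X => F (fun _ => u)) = Set.range F)
    (g : Y → X) (hg : QuasiInv (fun u : X => F (fun _ => u)) g) :
    (∀ x : Fin n → X, g (F (fun _ => g (F x))) = g (F x)) ∧
    (∀ x : Fin n → X, F (fun _ => g (F x)) = F x) ∧
    Set.InjOn (fun u : X => F (fun _ => u)) (Set.range fun x : Fin n → X => g (F x)) := by
  have key : ∀ x : Fin n → X, F (fun _ => g (F x)) = F x := by
    intro x
    have hx : F x ∈ Set.range (fun u : X => F (fun _ => u)) := by
      rw [hqri]; exact ⟨x, rfl⟩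
    exact hg.1 (F x) hx
  refine ⟨fun x => by rw [key x], key, ?_⟩
  rintro a ⟨x, rfl⟩ b ⟨y, rfl⟩ h
  simp only [key] at h
  exact congrArg g h
end

section
/- Let X be a nonempty set, let F : X* → X ∪ {ε} be a B-associative operation such that F(x) ∈ X for every nonempty string x ∈ X*, and let n ≥ 1 be an integer. If the diagonal section δ_{F_n} is injective, then δ_{F_n} = id, i.e., F(u^n) = u for every u ∈ X. -/
/-- `RepStr F y` is the string `F(y)^{|y|}`: `|y|` copies of `F y` if `F y ∈ X`,
and the empty string if `F y = ε` (here `ε` is encoded by `none`). -/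
def RepStr {X : Type*} (F : List X → Option X) (y : List X) : List X :=
  match F y with
  | some a => List.replicate y.length a
  | none => []

/-- `F` is barycentrically associative. -/
def BAssoc {X : Type*} (F : List X → Option X) : Prop :=
  ∀ x y z : List X, F (x ++ y ++ z) = F (x ++ RepStr F y ++ z)

/-- `F` is ε-standard: `F x = ε` iff `x = ε`. -/
def EpsStd {X : Type*} (F : List X → Option X) : Prop :=
  ∀ x : List X, F x = none ↔ x = []

/-- `F` is barycentrically preassociative. -/
def BPreassoc {X Y : Type*} (F : List X → Y) : Prop :=
  ∀ x y y' z : List X, y.length = y'.length → F y = F y' →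
    F (x ++ y ++ z) = F (x ++ y' ++ z)

/-- `F` is arity-wise range-idempotent: `F (F(x)^{|x|}) = F x`. -/
def AWRI {X : Type*} (F : List X → Option X) : Prop :=
  ∀ x : List X, F (RepStr F x) = F x

/-- `F` is arity-wise quasi-range-idempotent: `ran δ_{F_n} = ran F_n` for all `n ≥ 1`. -/
def AWQRI {X Y : Type*} (F : List X → Y) : Prop :=
  ∀ n : ℕ, 1 ≤ n →
    Set.range (fun u : X => F (List.replicate n u)) = F '' {l : List X | l.length = n}

/-- If `F : X* → X ∪ {ε}` is B-associative with `F x ∈ X` for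
every nonempty string `x`, and `δ_{F_n}` is injective for some `n ≥ 1`, then
`δ_{F_n} = id`, i.e. `F (uⁿ) = u` for every `u ∈ X`. -/
theorem stmt_3 {X : Type*} [Nonempty X] (F : List X → Option X)
    (hBA : BAssoc F)
    (hX : ∀ x : List X, x ≠ [] → (F x).isSome)
    (n : ℕ) (hn : 1 ≤ n)
    (hinj : Function.Injective fun u : X => F (List.replicate n u)) :
    ∀ u : X, F (List.replicate n u) = some u := by
  intro u
  have hne : List.replicate n u ≠ [] := by
    simp [List.replicate_eq_nil_iff]; omega
  obtain ⟨a, ha⟩ := Option.isSome_iff_exists.mp (hX _ hne)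
  have key := hBA [] (List.replicate n u) []
  simp only [List.nil_append, List.append_nil, RepStr, ha, List.length_replicate] at key
  have : a = u := hinj (by simp only []; rw [← key, ha])
  rw [ha, this]
end

section
/- Let X be a nonempty set and let F : X* → X ∪ {ε} be an operation. The following assertions are equivalent: (i) F is B-associative; (ii) for all strings x, y, z, x', y', z' ∈ X* such that xyz = x'y'z' (as strings), F(x F(y)^{|y|} z) = F(x' F(y')^{|y'|} z'); (iii) for all strings x, y, z ∈ X*, F(F(xy)^{|xy|} z) = F(x F(yz)^{|yz|}); (iv) for all strings x, y ∈ X*, F(xy) = F(F(x)^{|x|} F(y)^{|y|}). -/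
section Aux

variable {X : Type*} {F : List X → Option X}

lemma repstr_nil (F : List X → Option X) : RepStr F [] = [] := by
  unfold RepStr; cases F [] <;> simp

lemma repstr_congr {v w : List X} (h1 : F v = F w) (h2 : v.length = w.length) :
    RepStr F v = RepStr F w := by
  unfold RepStr; rw [h1, h2]

lemma repstr_length_some {v : List X} {a : X} (h : F v = some a) :
    (RepStr F v).length = v.length := by
  unfold RepStr; rw [h]; simp

lemma repstr_none {v : List X} (h : F v = none) : RepStr F v = [] := by
  unfold RepStr; rw [h]

section Four
variable (h4 : ∀ x y : List X, F (x ++ y) = F (RepStr F x ++ RepStr F y))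
include h4

lemma awri_of_4 (x : List X) : F (RepStr F x) = F x := by
  have := h4 x []
  simp [repstr_nil] at this
  exact this.symm

lemma rep_idem_of_4 (x : List X) : RepStr F (RepStr F x) = RepStr F x := by
  cases hx : F x with
  | none => rw [repstr_none hx, repstr_nil]
  | some a =>
      exact repstr_congr (awri_of_4 h4 x) (repstr_length_some hx)

lemma L1_of_4 (u w : List X) : F (u ++ RepStr F w) = F (u ++ w) := by
  rw [h4 u (RepStr F w), rep_idem_of_4 h4, ← h4 u w]

lemma L2_of_4 (u w : List X) : F (RepStr F w ++ u) = F (w ++ u) := by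
  rw [h4 (RepStr F w) u, rep_idem_of_4 h4, ← h4 w u]

lemma bassoc_of_4 : BAssoc F := by
  intro x y z
  cases hy : F y with
  | some b =>
      have key : RepStr F (y ++ z) = RepStr F (RepStr F y ++ z) := by
        refine repstr_congr (L2_of_4 h4 z y).symm ?_
        simp [repstr_length_some hy]
      calc F (x ++ y ++ z) = F (x ++ (y ++ z)) := by rw [List.append_assoc]
        _ = F (x ++ RepStr F (y ++ z)) := (L1_of_4 h4 x (y ++ z)).symm
        _ = F (x ++ RepStr F (RepStr F y ++ z)) := by rw [key]
        _ = F (x ++ (RepStr F y ++ z)) := L1_of_4 h4 x (RepStr F y ++ z)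
        _ = F (x ++ RepStr F y ++ z) := by rw [List.append_assoc]
  | none =>
      have hrep : RepStr F y = [] := repstr_none hy
      have key : RepStr F (y ++ z) = RepStr F (z ++ y) := by
        refine repstr_congr ?_ (by simp [Nat.add_comm])
        rw [h4 y z, h4 z y, hrep]
        simp
      calc F (x ++ y ++ z) = F (x ++ (y ++ z)) := by rw [List.append_assoc]
        _ = F (x ++ RepStr F (y ++ z)) := (L1_of_4 h4 x (y ++ z)).symm
        _ = F (x ++ RepStr F (z ++ y)) := by rw [key]
        _ = F (x ++ (z ++ y)) := L1_of_4 h4 x (z ++ y)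
        _ = F ((x ++ z) ++ y) := by rw [List.append_assoc]
        _ = F ((x ++ z) ++ RepStr F y) := (L1_of_4 h4 (x ++ z) y).symm
        _ = F (x ++ RepStr F y ++ z) := by rw [hrep]; simp

end Four

end Aux

/-- Equivalent definitions of B-associativity. -/
theorem stmt_4 {X : Type*} [Nonempty X] (F : List X → Option X) :
    List.TFAE
      [BAssoc F,
       ∀ x y z x' y' z' : List X, x ++ y ++ z = x' ++ y' ++ z' →
          F (x ++ RepStr F y ++ z) = F (x' ++ RepStr F y' ++ z'),
       ∀ x y z : List X, F (RepStr F (x ++ y) ++ z) = F (x ++ RepStr F (y ++ z)),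
       ∀ x y : List X, F (x ++ y) = F (RepStr F x ++ RepStr F y)] := by
  tfae_have 1 → 2 := by
    intro h x y z x' y' z' heq
    rw [← h x y z, heq, h x' y' z']
  tfae_have 2 → 3 := by
    intro h x y z
    have := h [] (x ++ y) z x (y ++ z) [] (by simp [List.append_assoc])
    simpa using this
  tfae_have 3 → 4 := by
    intro h x y
    have awri : ∀ w : List X, F (RepStr F w) = F w := by
      intro w
      have := h w [] []
      simpa [repstr_nil] using this
    have A : F (RepStr F (x ++ y)) = F (x ++ RepStr F y) := by simpa using h x y []
    have B : F (RepStr F x ++ RepStr F y) = F (RepStr F (x ++ RepStr F y)) := by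
      simpa using h [] x (RepStr F y)
    rw [B, awri, ← A, awri]
  tfae_have 4 → 1 := fun h => bassoc_of_4 h
  tfae_finish
end

section
/- Let X be a nonempty set and let F, G : X* → X ∪ {ε} be two B-associative ε-standard operations such that, for every integer k ≥ 0, δ^r_{F_k} = δ^r_{G_k} or δ^ℓ_{F_k} = δ^ℓ_{G_k}. Then F = G. -/
/-- `DeltaREq F G k` says `δʳ_{F_k} = δʳ_{G_k}` (with the conventions
`δʳ_{F_0} = F_0` and `δʳ_{F_1} = F_1`); for `k ≥ 2`,
`δʳ_{F_k}(u,v) = F (u^{k-1} v)`. -/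
def DeltaREq {X Y : Type*} (F G : List X → Y) : ℕ → Prop
  | 0 => F [] = G []
  | 1 => ∀ u : X, F [u] = G [u]
  | (n + 2) => ∀ u v : X,
      F (List.replicate (n + 1) u ++ [v]) = G (List.replicate (n + 1) u ++ [v])

/-- `DeltaLEq F G k` says `δˡ_{F_k} = δˡ_{G_k}` (with the conventions
`δˡ_{F_0} = F_0` and `δˡ_{F_1} = F_1`); for `k ≥ 2`,
`δˡ_{F_k}(u,v) = F (u v^{k-1})`. -/
def DeltaLEq {X Y : Type*} (F G : List X → Y) : ℕ → Prop
  | 0 => F [] = G []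
  | 1 => ∀ u : X, F [u] = G [u]
  | (n + 2) => ∀ u v : X,
      F (u :: List.replicate (n + 1) v) = G (u :: List.replicate (n + 1) v)

/-- Two B-associative ε-standard operations which, for every
arity `k`, have the same `δʳ` or the same `δˡ`, coincide. -/
theorem stmt_6 {X : Type*} [Nonempty X] (F G : List X → Option X)
    (hF : BAssoc F) (hFs : EpsStd F) (hG : BAssoc G) (hGs : EpsStd G)
    (h : ∀ k : ℕ, DeltaREq F G k ∨ DeltaLEq F G k) :
    F = G := by
  funext x
  suffices H : ∀ n, ∀ x : List X, x.length = n → F x = G x from H x.length x rfl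
  intro n
  induction n using Nat.strong_induction_on with
  | _ n ih =>
    intro x hx
    match n, hx with
    | 0, hx =>
      rw [List.length_eq_zero_iff] at hx; subst hx
      rw [(hFs []).2 rfl, (hGs []).2 rfl]
    | 1, hx =>
      obtain ⟨u, rfl⟩ : ∃ u, x = [u] := List.length_eq_one_iff.1 hx
      rcases h 1 with h1 | h1 <;> exact h1 u
    | (m+2), hx =>
      rcases h (m+2) with hk | hk
      · obtain ⟨y, v, rfl⟩ : ∃ y v, x = y ++ [v] := by
          rcases List.eq_nil_or_concat x with rfl | ⟨y, v, rfl⟩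
          · simp at hx
          · exact ⟨y, v, by simp⟩
        have hy : y.length = m + 1 := by simpa using hx
        have hyne : y ≠ [] := by intro h'; simp [h'] at hy
        obtain ⟨a, ha⟩ : ∃ a, F y = some a := by
          cases hFy : F y with
          | none => exact absurd ((hFs y).1 hFy) hyne
          | some a => exact ⟨a, rfl⟩
        have hGy : G y = some a := by rw [← ih (m+1) (by omega) y hy]; exact ha
        have e1 : F (y ++ [v]) = F (List.replicate (m+1) a ++ [v]) := by
          have := hF [] y [v]
          simpa [RepStr, ha, hy] using this
        have e2 : G (y ++ [v]) = G (List.replicate (m+1) a ++ [v]) := by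
          have := hG [] y [v]
          simpa [RepStr, hGy, hy] using this
        rw [e1, e2, hk a v]
      · obtain ⟨u, z, rfl⟩ : ∃ u z, x = u :: z := by
          cases x with
          | nil => simp at hx
          | cons u z => exact ⟨u, z, rfl⟩
        have hz : z.length = m + 1 := by simpa using hx
        have hzne : z ≠ [] := by intro h'; simp [h'] at hz
        obtain ⟨a, ha⟩ : ∃ a, F z = some a := by
          cases hFz : F z with
          | none => exact absurd ((hFs z).1 hFz) hzne
          | some a => exact ⟨a, rfl⟩
        have hGz : G z = some a := by rw [← ih (m+1) (by omega) z hz]; exact ha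
        have e1 : F (u :: z) = F (u :: List.replicate (m+1) a) := by
          have := hF [u] z []
          simpa [RepStr, ha, hz] using this
        have e2 : G (u :: z) = G (u :: List.replicate (m+1) a) := by
          have := hG [u] z []
          simpa [RepStr, hGz, hz] using this
        rw [e1, e2, hk u a]
end

section
/- For every real number z and every integer n ≥ 1, the quantity Δ_n^z := Σ_{i=1}^n z^{n-i}(1-z)^{i-1} is nonzero, and the ε-standard operation M^z : ℝ* → ℝ ∪ {ε} defined by M^z_n(x₁,…,x_n) = (Σ_{i=1}^n z^{n-i}(1-z)^{i-1} x_i)/Δ_n^z for every n ≥ 1 is B-associative. -/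
/-- `Δ_n^z = ∑_{i=1}^n z^{n-i} (1-z)^{i-1}` (indexing shifted to `i ∈ range n`). -/
noncomputable def DeltaZ (z : ℝ) (n : ℕ) : ℝ :=
  ∑ i ∈ Finset.range n, z ^ (n - 1 - i) * (1 - z) ^ i

/-- The ε-standard operation `M^z` with
`M^z_n(x₁,…,x_n) = (∑_{i=1}^n z^{n-i}(1-z)^{i-1} x_i) / Δ_n^z`. -/
noncomputable def Mz (z : ℝ) (l : List ℝ) : Option ℝ :=
  if l = [] then none
  else some ((∑ i ∈ Finset.range l.length,
      z ^ (l.length - 1 - i) * (1 - z) ^ i * l.getD i 0) / DeltaZ z l.length)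

noncomputable def Sz (z : ℝ) (l : List ℝ) : ℝ :=
  ∑ i ∈ Finset.range l.length, z ^ (l.length - 1 - i) * (1 - z) ^ i * l.getD i 0

lemma Sz_cons (z a : ℝ) (t : List ℝ) :
    Sz z (a :: t) = z ^ t.length * a + (1 - z) * Sz z t := by
  unfold Sz
  rw [List.length_cons, Finset.sum_range_succ', Finset.mul_sum]
  simp only [List.getD_cons_succ, List.getD_cons_zero, pow_zero, mul_one,
    Nat.add_sub_cancel, Nat.sub_zero]
  rw [add_comm]
  congr 1
  apply Finset.sum_congr rfl
  intro i hi
  have : t.length - (i + 1) = t.length - 1 - i := by omega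
  rw [this]; ring

lemma Sz_nil (z : ℝ) : Sz z [] = 0 := by simp [Sz]

lemma Sz_append (z : ℝ) (x y : List ℝ) :
    Sz z (x ++ y) = z ^ y.length * Sz z x + (1 - z) ^ x.length * Sz z y := by
  induction x with
  | nil => simp [Sz_nil]
  | cons a t ih =>
      rw [List.cons_append, Sz_cons, Sz_cons, ih, List.length_append,
        List.length_cons, pow_add, pow_succ]
      ring

lemma DeltaZ_succ (z : ℝ) (n : ℕ) :
    DeltaZ z (n + 1) = z ^ n + (1 - z) * DeltaZ z n := by
  unfold DeltaZ
  rw [Finset.sum_range_succ', Finset.mul_sum]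
  simp only [pow_zero, mul_one, Nat.add_sub_cancel, Nat.sub_zero]
  rw [add_comm]
  congr 1
  apply Finset.sum_congr rfl
  intro i hi
  have : n - (i + 1) = n - 1 - i := by omega
  rw [this]; ring

lemma Sz_replicate (z u : ℝ) (n : ℕ) :
    Sz z (List.replicate n u) = DeltaZ z n * u := by
  induction n with
  | zero => simp [Sz_nil, DeltaZ]
  | succ n ih =>
      rw [List.replicate_succ, Sz_cons, List.length_replicate, ih, DeltaZ_succ]
      ring

lemma DeltaZ_ne_zero (z : ℝ) (n : ℕ) (hn : 1 ≤ n) : DeltaZ z n ≠ 0 := by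
  by_cases hz : z = 1 / 2
  · subst hz
    have : DeltaZ (1 / 2) n = n * (1 / 2 : ℝ) ^ (n - 1) := by
      unfold DeltaZ
      rw [Finset.sum_congr rfl (fun i hi => ?_), Finset.sum_const,
        Finset.card_range, nsmul_eq_mul]
      have h1 : (1 - (1 / 2 : ℝ)) = 1 / 2 := by norm_num
      rw [h1, ← pow_add]
      congr 1
      have := Finset.mem_range.mp hi
      omega
    rw [this]
    positivity
  · have key : ∀ m : ℕ, (2 * z - 1) * DeltaZ z m = z ^ m - (1 - z) ^ m := by
      intro m
      induction m with
      | zero => simp [DeltaZ]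
      | succ m ih => rw [DeltaZ_succ]; ring_nf; ring_nf at ih; linear_combination (1 - z) * ih
    intro h0
    have h2 : z ^ n = (1 - z) ^ n := by
      have := key n
      rw [h0, mul_zero] at this
      linarith [this]
    have habs : |z| ^ n = |1 - z| ^ n := by
      rw [← abs_pow, ← abs_pow, h2]
    have : |z| = |1 - z| :=
      (pow_left_inj₀ (abs_nonneg _) (abs_nonneg _) (by omega : n ≠ 0)).mp habs
    rcases abs_eq_abs.mp this with h | h
    · apply hz; linarith
    · linarith

lemma Mz_eq (z : ℝ) (l : List ℝ) (hl : l ≠ []) :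
    Mz z l = some (Sz z l / DeltaZ z l.length) := by
  simp [Mz, hl, Sz]

/-- For every real `z` and `n ≥ 1`, `Δ_n^z ≠ 0`, and the
ε-standard operation `M^z` is B-associative. -/
theorem stmt_8 (z : ℝ) :
    (∀ n : ℕ, 1 ≤ n → DeltaZ z n ≠ 0) ∧ EpsStd (Mz z) ∧ BAssoc (Mz z) := by
  refine ⟨fun n hn => DeltaZ_ne_zero z n hn, fun x => by simp [Mz], ?_⟩
  intro x y w
  by_cases hy : y = []
  · subst hy
    simp [RepStr, Mz]
  · set q := y.length with hq
    have hq1 : 1 ≤ q := by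
      cases y with
      | nil => exact absurd rfl hy
      | cons a t => simp [hq]
    set u := Sz z y / DeltaZ z q with hu
    have hrep : RepStr (Mz z) y = List.replicate q u := by
      rw [RepStr, Mz_eq z y hy]
    rw [hrep]
    have hne1 : x ++ y ++ w ≠ [] := by
      simp [hy]
    have hne2 : x ++ List.replicate q u ++ w ≠ [] := by
      have : (List.replicate q u) ≠ [] := by
        intro h
        have := congrArg List.length h
        simp at this
        omega
      simp [this]
    rw [Mz_eq z _ hne1, Mz_eq z _ hne2]
    have hlen : (x ++ y ++ w).length = (x ++ List.replicate q u ++ w).length := by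
      simp [hq]
    have hS : Sz z (x ++ y ++ w) = Sz z (x ++ List.replicate q u ++ w) := by
      rw [Sz_append, Sz_append, Sz_append, Sz_append, Sz_replicate,
        List.length_replicate]
      have : DeltaZ z q * u = Sz z y := by
        rw [hu, mul_div_cancel₀]
        exact DeltaZ_ne_zero z q hq1
      rw [this]
      simp [List.length_append, ← hq]
    rw [hlen, hS]
end

section
/- Let X be a nonempty set and let H : X* → X ∪ {ε} be an associative and arity-wise quasi-range-idempotent ε-standard operation. Then any ε-standard operation F : X* → X ∪ {ε} such that, for every n ≥ 1, F_n = g_n ∘ H_n for some quasi-inverse g_n of δ_{H_n}, is B-associative. -/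
/-- If `H` is an associative, arity-wise quasi-range-idempotent,
ε-standard operation, then every ε-standard operation `F` with
`F_n = g_n ∘ H_n` for some quasi-inverse `g_n` of `δ_{H_n}` (for each `n ≥ 1`)
is B-associative.  (Associativity: `F (xyz) = F (x F(y) z)`, where `F y` is a
one-letter string if `F y ∈ X` and `ε` otherwise, via `Option.toList`.) -/
theorem stmt_10 {X : Type*} [Nonempty X] (H F : List X → Option X)
    (hassoc : ∀ x y z : List X, H (x ++ y ++ z) = H (x ++ (H y).toList ++ z))
    (hqri : AWQRI H) (hHs : EpsStd H) (hFs : EpsStd F)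
    (hcomp : ∀ n : ℕ, 1 ≤ n → ∃ g : Option X → X,
      QuasiInv (fun u : X => H (List.replicate n u)) g ∧
      ∀ l : List X, l.length = n → F l = some (g (H l))) :
    BAssoc F := by
  intro x y z
  rcases eq_or_ne y [] with rfl | hy
  · simp [RepStr, (hFs []).mpr rfl]
  · set n := y.length with hn_def
    have hn : 1 ≤ n := by
      have := List.length_pos_iff.mpr hy
      omega
    obtain ⟨g, ⟨hg1, _⟩, hgF⟩ := hcomp n hn
    have hFy : F y = some (g (H y)) := hgF y rfl
    have hmem : H y ∈ Set.range (fun u : X => H (List.replicate n u)) := by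
      rw [hqri n hn]; exact ⟨y, rfl, rfl⟩
    have hHrep : H (List.replicate n (g (H y))) = H y := hg1 _ hmem
    have hrep : RepStr F y = List.replicate n (g (H y)) := by
      simp [RepStr, hFy, hn_def]
    have hH : H (x ++ y ++ z) = H (x ++ RepStr F y ++ z) := by
      rw [hassoc x y z, hrep, hassoc x (List.replicate n (g (H y))) z, hHrep]
    have hlen : (x ++ RepStr F y ++ z).length = (x ++ y ++ z).length := by
      simp [hrep, hn_def]
    have hm : 1 ≤ (x ++ y ++ z).length := by
      simp only [List.length_append]
      omega
    obtain ⟨g', _, hgF'⟩ := hcomp _ hm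
    rw [hgF' _ rfl, hgF' _ hlen, hH]
end

section
/- Let X, Y, Y' be nonempty sets, let F : X* → Y be B-preassociative, and for every n ≥ 1 let g_n : Y → Y' be a function whose restriction to ran(F_n) is injective. Then any function H : X* → Y' satisfying H_n = g_n ∘ F_n for every n ≥ 1 is B-preassociative. -/
/-- Left composition: If `F : X* → Y` is B-preassociative and
each `g_n : Y → Y'` is injective on `ran F_n`, then any `H : X* → Y'` with
`H_n = g_n ∘ F_n` for every `n ≥ 1` is B-preassociative. -/
theorem stmt_11 {X Y Y' : Type*} [Nonempty X] [Nonempty Y] [Nonempty Y']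
    (F : List X → Y) (hF : BPreassoc F)
    (g : ℕ → Y → Y')
    (hg : ∀ n : ℕ, 1 ≤ n → Set.InjOn (g n) (F '' {l : List X | l.length = n}))
    (H : List X → Y')
    (hH : ∀ n : ℕ, 1 ≤ n → ∀ l : List X, l.length = n → H l = g n (F l)) :
    BPreassoc H := by
  intro x y y' z hlen hHy
  rcases eq_or_ne y [] with rfl | hy
  · rw [List.eq_nil_of_length_eq_zero hlen.symm]
  · have hn : 1 ≤ y.length := Nat.one_le_iff_ne_zero.mpr (by simpa using hy)
    have hFy : F y = F y' := by
      apply hg y.length hn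
      · exact ⟨y, rfl, rfl⟩
      · exact ⟨y', hlen.symm, rfl⟩
      · rw [← hH y.length hn y rfl, ← hH y.length hn y' hlen.symm]; exact hHy
    have hm : 1 ≤ (x ++ y ++ z).length := by
      simp only [List.length_append]; omega
    have hm' : (x ++ y' ++ z).length = (x ++ y ++ z).length := by
      simp [hlen]
    rw [hH _ hm _ rfl, hH _ hm _ hm', hF x y y' z hlen hFy]
end

section
/- Let X and Y be nonempty sets, let F : X* → Y be B-preassociative, and let k ≥ 2 be an integer. If for all letters x, z ∈ X the function X^k → Y, y ↦ F(xyz), is symmetric, then for all letters x, z ∈ X the function X^{k+1} → Y, y ↦ F(xyz), is symmetric. -/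
/-- Let `F : X* → Y` be B-preassociative and `k ≥ 2`.  If for all
letters `x, z` the map `y ∈ X^k ↦ F (x y z)` is symmetric, then for all letters
`x, z` the map `y ∈ X^{k+1} ↦ F (x y z)` is symmetric. -/
theorem stmt_12 {X Y : Type*} [Nonempty X] [Nonempty Y]
    (F : List X → Y) (hF : BPreassoc F) (k : ℕ) (hk : 2 ≤ k)
    (hsym : ∀ x z : X, ∀ y y' : List X, y.length = k → y.Perm y' →
      F (x :: (y ++ [z])) = F (x :: (y' ++ [z]))) :
    ∀ x z : X, ∀ y y' : List X, y.length = k + 1 → y.Perm y' →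
      F (x :: (y ++ [z])) = F (x :: (y' ++ [z])) := by
  intro x z
  suffices H : ∀ y y' : List X, y.Perm y' → y.length = k + 1 →
      F (x :: (y ++ [z])) = F (x :: (y' ++ [z])) by
    intro y y' hlen hperm; exact H y y' hperm hlen
  intro y y' hperm
  induction hperm with
  | nil => intro _; rfl
  | cons a h ih =>
    intro hlen
    rename_i l₁ l₂
    have hl : l₁.length = k := by simpa using hlen
    have hw := hsym a z l₁ l₂ hl h
    have := hF [x] (a :: (l₁ ++ [z])) (a :: (l₂ ++ [z])) []
      (by simp [h.length_eq]) hw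
    simpa using this
  | swap a b l =>
    intro hlen
    rcases l.eq_nil_or_concat with rfl | ⟨m, c, rfl⟩
    · simp at hlen; omega
    · have hm : (b :: a :: m).length = k := by
        simp at hlen ⊢; omega
      have hw := hsym x c (b :: a :: m) (a :: b :: m) hm (List.Perm.swap a b m)
      have := hF [] (x :: ((b :: a :: m) ++ [c])) (x :: ((a :: b :: m) ++ [c])) [z]
        (by simp) hw
      simpa using this
  | trans h1 h2 ih1 ih2 =>
    intro hlen
    exact (ih1 hlen).trans (ih2 (by rw [← h1.length_eq]; exact hlen))
end

section
/- Let X and Y be nonempty sets and let F, G : X* → Y be B-preassociative and arity-wise quasi-range-idempotent functions such that, for every integer k ≥ 0, δ^r_{F_k} = δ^r_{G_k} or δ^ℓ_{F_k} = δ^ℓ_{G_k}. Then F = G. -/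
/-- Two B-preassociative and arity-wise quasi-range-idempotent
functions which, for every arity `k`, have the same `δʳ` or the same `δˡ`,
coincide. -/
theorem stmt_13 {X Y : Type*} [Nonempty X] [Nonempty Y] (F G : List X → Y)
    (hF : BPreassoc F) (hFq : AWQRI F) (hG : BPreassoc G) (hGq : AWQRI G)
    (h : ∀ k : ℕ, DeltaREq F G k ∨ DeltaLEq F G k) :
    F = G := by
  have main : ∀ n : ℕ, ∀ x : List X, x.length = n → F x = G x := by
    intro n
    induction n with
    | zero =>
      intro x hx
      rw [List.length_eq_zero_iff] at hx; subst hx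
      rcases h 0 with h0 | h0 <;> exact h0
    | succ m ih =>
      match m with
      | 0 =>
        intro x hx
        match x with
        | [u] => rcases h 1 with h1 | h1 <;> exact h1 u
      | m + 1 =>
        intro x hx
        rcases h (m + 2) with hk | hk
        · -- right-diagonal case: split x = x' ++ [v]
          obtain ⟨x', v, rfl⟩ :=
            x.eq_nil_or_concat.resolve_left (by intro hnil; simp [hnil] at hx)
          have hx' : x'.length = m + 1 := by
            simpa using hx
          -- find u with F (u^{m+1}) = F x'
          have hmem : F x' ∈ F '' {l : List X | l.length = m + 1} :=
            ⟨x', hx', rfl⟩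
          rw [← hFq (m + 1) (Nat.le_add_left 1 m)] at hmem
          obtain ⟨u, hu⟩ := hmem
          have hlen : x'.length = (List.replicate (m + 1) u).length := by
            simp [hx']
          have e1 : F (x' ++ [v]) = F (List.replicate (m + 1) u ++ [v]) := by
            have := hF [] x' (List.replicate (m + 1) u) [v] hlen hu.symm
            simpa using this
          have e2 : F (List.replicate (m + 1) u ++ [v])
              = G (List.replicate (m + 1) u ++ [v]) := hk u v
          have hGrep : G (List.replicate (m + 1) u) = G x' := by
            rw [← ih (List.replicate (m + 1) u) (by simp), ← ih x' hx']
            exact hu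
          have e3 : G (List.replicate (m + 1) u ++ [v]) = G (x' ++ [v]) := by
            have := hG [] (List.replicate (m + 1) u) x' [v] hlen.symm hGrep
            simpa using this
          simpa using e1.trans (e2.trans e3)
        · -- left-diagonal case: split x = v :: x''
          match x, hx with
          | v :: x'', hx =>
            have hx'' : x''.length = m + 1 := by simpa using hx
            have hmem : F x'' ∈ F '' {l : List X | l.length = m + 1} :=
              ⟨x'', hx'', rfl⟩
            rw [← hFq (m + 1) (Nat.le_add_left 1 m)] at hmem
            obtain ⟨u, hu⟩ := hmem
            have hlen : x''.length = (List.replicate (m + 1) u).length := by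
              simp [hx'']
            have e1 : F (v :: x'') = F (v :: List.replicate (m + 1) u) := by
              have := hF [v] x'' (List.replicate (m + 1) u) [] hlen hu.symm
              simpa using this
            have e2 : F (v :: List.replicate (m + 1) u)
                = G (v :: List.replicate (m + 1) u) := hk v u
            have hGrep : G (List.replicate (m + 1) u) = G x'' := by
              rw [← ih (List.replicate (m + 1) u) (by simp), ← ih x'' hx'']
              exact hu
            have e3 : G (v :: List.replicate (m + 1) u) = G (v :: x'') := by
              have := hG [v] (List.replicate (m + 1) u) x'' [] hlen.symm hGrep
              simpa using this
            exact e1.trans (e2.trans e3)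
  funext x
  exact main x.length x rfl
end

section
/- Let X and Y be nonempty sets, let F : X* → Y be a function, let H : X* → X ∪ {ε} be a B-associative ε-standard operation, and for each n ≥ 1 let f_n : ran(H_n) → Y be an injective function with F_n = f_n ∘ H_n. Then the following assertions are equivalent: (i) δ_{F_n} is injective for every n ≥ 1; (ii) δ_{H_n} is injective for every n ≥ 1; (iii) δ_{H_n} = id for every n ≥ 1 (i.e., H(u^n) = u for every u ∈ X and n ≥ 1). -/
/-- Let `H` be a B-associative ε-standard operation and for each
`n ≥ 1` let `f_n : ran H_n → Y` be injective with `F_n = f_n ∘ H_n`.  Then the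
injectivity of all `δ_{F_n}`, the injectivity of all `δ_{H_n}`, and
`δ_{H_n} = id` for all `n ≥ 1` are equivalent. -/
theorem stmt_16 {X Y : Type*} [Nonempty X] [Nonempty Y]
    (F : List X → Y) (H : List X → Option X)
    (hH : BAssoc H) (hHs : EpsStd H)
    (f : ℕ → X → Y)
    (hinj : ∀ n : ℕ, 1 ≤ n →
      Set.InjOn (f n) {a : X | ∃ l : List X, l.length = n ∧ H l = some a})
    (hcomp : ∀ n : ℕ, 1 ≤ n →
      ∀ l : List X, l.length = n → ∀ a : X, H l = some a → F l = f n a) :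
    ((∀ n : ℕ, 1 ≤ n → Function.Injective fun u : X => F (List.replicate n u)) ↔
      (∀ n : ℕ, 1 ≤ n → Function.Injective fun u : X => H (List.replicate n u))) ∧
    ((∀ n : ℕ, 1 ≤ n → Function.Injective fun u : X => F (List.replicate n u)) ↔
      (∀ n : ℕ, 1 ≤ n → ∀ u : X, H (List.replicate n u) = some u)) := by
  -- every δ_{H_n} hits some value
  have hsome : ∀ n : ℕ, 1 ≤ n → ∀ u : X, ∃ a, H (List.replicate n u) = some a := by
    intro n hn u
    rcases h : H (List.replicate n u) with _ | a
    · exfalso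
      have := (hHs (List.replicate n u)).mp h
      simp [List.replicate_eq_nil_iff] at this
      omega
    · exact ⟨a, rfl⟩
  -- (ii) → (iii)
  have B : (∀ n : ℕ, 1 ≤ n → Function.Injective fun u : X => H (List.replicate n u)) →
      (∀ n : ℕ, 1 ≤ n → ∀ u : X, H (List.replicate n u) = some u) := by
    intro hii n hn u
    obtain ⟨a, ha⟩ := hsome n hn u
    have hb := hH [] (List.replicate n u) []
    simp only [List.nil_append, List.append_nil] at hb
    have hrep : RepStr H (List.replicate n u) = List.replicate n a := by
      unfold RepStr; rw [ha]; simp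
    rw [hrep] at hb
    have := hii n hn hb
    rw [ha, this]
  -- (i) → (ii)
  have A : (∀ n : ℕ, 1 ≤ n → Function.Injective fun u : X => F (List.replicate n u)) →
      (∀ n : ℕ, 1 ≤ n → Function.Injective fun u : X => H (List.replicate n u)) := by
    intro hi n hn u v huv
    simp only at huv
    obtain ⟨a, ha⟩ := hsome n hn u
    apply hi n hn
    simp only
    rw [hcomp n hn _ ((List.length_replicate : (List.replicate n u).length = n)) a ha,
        hcomp n hn _ ((List.length_replicate : (List.replicate n v).length = n)) a (by rw [← huv, ha])]
  -- (iii) → (i)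
  have C : (∀ n : ℕ, 1 ≤ n → ∀ u : X, H (List.replicate n u) = some u) →
      (∀ n : ℕ, 1 ≤ n → Function.Injective fun u : X => F (List.replicate n u)) := by
    intro hiii n hn u v huv
    simp only at huv
    rw [hcomp n hn _ ((List.length_replicate : (List.replicate n u).length = n)) u (hiii n hn u),
        hcomp n hn _ ((List.length_replicate : (List.replicate n v).length = n)) v (hiii n hn v)] at huv
    exact hinj n hn ⟨_, (List.length_replicate : (List.replicate n u).length = n), hiii n hn u⟩
      ⟨_, (List.length_replicate : (List.replicate n v).length = n), hiii n hn v⟩ huv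
  exact ⟨⟨A, fun h => C (B h)⟩, ⟨fun h => B (A h), C⟩⟩
end

section
/- Let X and Y be nonempty sets and let F : X* → Y be a function such that δ_{F_n} is injective for every n ≥ 1. The following assertions are equivalent: (i) F is B-preassociative and arity-wise quasi-range-idempotent; (ii) there exists a B-associative and idempotent ε-standard operation H : X* → X ∪ {ε} (i.e., H(u^n) = u for every u ∈ X and n ≥ 1) such that F_n = δ_{F_n} ∘ H_n for every n ≥ 1. -/
/-- Let `F : X* → Y` have injective diagonal sections `δ_{F_n}`
for all `n ≥ 1`.  Then `F` is B-preassociative and arity-wise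
quasi-range-idempotent iff there is a B-associative, idempotent, ε-standard
operation `H` with `F_n = δ_{F_n} ∘ H_n` for every `n ≥ 1`. -/
theorem stmt_17 {X Y : Type*} [Nonempty X] [Nonempty Y] (F : List X → Y)
    (hinj : ∀ n : ℕ, 1 ≤ n →
      Function.Injective fun u : X => F (List.replicate n u)) :
    (BPreassoc F ∧ AWQRI F) ↔
      (∃ H : List X → Option X, BAssoc H ∧ EpsStd H ∧
        (∀ n : ℕ, 1 ≤ n → ∀ u : X, H (List.replicate n u) = some u) ∧
        (∀ n : ℕ, 1 ≤ n → ∀ l : List X, l.length = n → ∀ a : X,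
          H l = some a → F l = F (List.replicate n a))) := by

  classical
  constructor
  · rintro ⟨hpre, hq⟩
    have hex : ∀ l : List X, l ≠ [] → ∃ u : X, F (List.replicate l.length u) = F l := by
      intro l hl
      have h1 : 1 ≤ l.length := List.length_pos_iff.mpr hl
      have h2 : F l ∈ F '' {l' : List X | l'.length = l.length} := ⟨l, rfl, rfl⟩
      rw [← hq l.length h1] at h2
      exact h2
    set H : List X → Option X :=
      fun l => if h : l = [] then none else some (Classical.choose (hex l h)) with hHdef
    have hHnil : H [] = none := by simp [hHdef]
    have hHsome : ∀ l (h : l ≠ []), H l = some (Classical.choose (hex l h)) := by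
      intro l h; simp [hHdef, h]
    have hcomp : ∀ l a, H l = some a → F l = F (List.replicate l.length a) := by
      intro l a hla
      by_cases h : l = []
      · rw [h, hHnil] at hla; exact absurd hla (by simp)
      · rw [hHsome l h, Option.some_inj] at hla
        rw [← hla]
        exact (Classical.choose_spec (hex l h)).symm
    have hdet : ∀ l l' : List X, l.length = l'.length → F l = F l' → H l = H l' := by
      intro l l' hlen hF
      by_cases h : l = []
      · have h' : l' = [] := by
          apply List.length_eq_zero_iff.mp; rw [← hlen, h]; rfl
        rw [h, h']
      · have h' : l' ≠ [] := by
          intro hc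
          exact h (List.length_eq_zero_iff.mp (by rw [hlen, hc]; rfl))
        rw [hHsome l h, hHsome l' h', Option.some_inj]
        apply hinj l.length (List.length_pos_iff.mpr h)
        show F (List.replicate l.length _) = F (List.replicate l.length _)
        rw [Classical.choose_spec (hex l h), hF, hlen, Classical.choose_spec (hex l' h')]
    have hBA : BAssoc H := by
      intro x y z
      by_cases h : y = []
      · subst h; simp only [RepStr, hHnil]
      · have hy := hHsome y h
        have hR : RepStr H y = List.replicate y.length (Classical.choose (hex y h)) := by
          simp [RepStr, hy]
        apply hdet
        · simp [hR]
        · rw [hR]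
          exact hpre x y _ z (by simp) (Classical.choose_spec (hex y h)).symm
    refine ⟨H, hBA, ?_, ?_, ?_⟩
    · intro l
      constructor
      · intro hnone
        by_contra h
        rw [hHsome l h] at hnone
        exact absurd hnone (by simp)
      · intro h; rw [h, hHnil]
    · intro n hn u
      have hne : List.replicate n u ≠ [] := by
        intro hc
        have := congrArg List.length hc
        simp at this
        omega
      rw [hHsome _ hne, Option.some_inj]
      apply hinj n hn
      show F (List.replicate n _) = F (List.replicate n u)
      simpa using Classical.choose_spec (hex _ hne)
    · intro n hn l hl a hla
      rw [← hl]
      exact hcomp l a hla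
  · rintro ⟨H, hBA, hEps, hid, hcomp⟩
    have hHne : ∀ l : List X, l ≠ [] → ∃ a, H l = some a := by
      intro l h
      cases hc : H l with
      | none => exact absurd ((hEps l).mp hc) h
      | some a => exact ⟨a, rfl⟩
    constructor
    · intro x y y' z hlen hF
      by_cases h : y = []
      · have h' : y' = [] := by
          apply List.length_eq_zero_iff.mp; rw [← hlen, h]; rfl
        rw [h, h']
      · have h' : y' ≠ [] := by
          intro hc
          exact h (List.length_eq_zero_iff.mp (by rw [hlen, hc]; rfl))
        have hy1 : 1 ≤ y.length := List.length_pos_iff.mpr h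
        obtain ⟨a, ha⟩ := hHne y h
        obtain ⟨b, hb⟩ := hHne y' h'
        have hFa : F y = F (List.replicate y.length a) := hcomp y.length hy1 y rfl a ha
        have hFb : F y' = F (List.replicate y.length b) := by
          have := hcomp y'.length (hlen ▸ hy1) y' rfl b hb
          rw [this, hlen]
        have hab : a = b := by
          apply hinj y.length hy1
          show F (List.replicate y.length a) = F (List.replicate y.length b)
          rw [← hFa, ← hFb, hF]
        have hRy : RepStr H y = List.replicate y.length a := by simp [RepStr, ha]
        have hRy' : RepStr H y' = List.replicate y.length a := by
          simp [RepStr, hb, ← hlen, hab]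
        have hHeq : H (x ++ y ++ z) = H (x ++ y' ++ z) := by
          rw [hBA x y z, hBA x y' z, hRy, hRy']
        have hne1 : x ++ y ++ z ≠ [] := by simp [h]
        obtain ⟨c, hc⟩ := hHne _ hne1
        have hc' : H (x ++ y' ++ z) = some c := hHeq ▸ hc
        have hlen2 : (x ++ y' ++ z).length = (x ++ y ++ z).length := by simp [hlen]
        have hm : 1 ≤ (x ++ y ++ z).length := by simp; omega
        have hF1 := hcomp (x ++ y ++ z).length hm (x ++ y ++ z) rfl c hc
        have hF2 := hcomp (x ++ y ++ z).length hm (x ++ y' ++ z) hlen2 c hc'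
        rw [hF1, hF2]
    · intro n hn
      ext b
      constructor
      · rintro ⟨u, rfl⟩
        exact ⟨List.replicate n u, by simp, rfl⟩
      · rintro ⟨l, hl, rfl⟩
        have hln : l.length = n := hl
        have hne : l ≠ [] := by
          intro hc; rw [hc] at hln; simp at hln; omega
        obtain ⟨a, ha⟩ := hHne l hne
        exact ⟨a, (hcomp n hn l hln a ha).symm⟩
end

section
/- Let I ⊆ ℝ be a nontrivial real interval (an order-convex set containing at least two points), possibly unbounded. Let f, g : I → ℝ be continuous and strictly monotonic functions and, for every n ≥ 1, let f_n, g_n : ℝ → ℝ be continuous and strictly monotonic functions. Then f_n((1/n)·Σ_{i=1}^n f(x_i)) = g_n((1/n)·Σ_{i=1}^n g(x_i)) for every n ≥ 1 and all x₁,…,x_n ∈ I if and only if there exist real numbers r, s with r ≠ 0 such that g(x) = r·f(x) + s for every x ∈ I and f_n(t) = g_n(r·t + s) for every n ≥ 1 and every t in the image f(I). -/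
/-- Average of a nonempty list of elements of a convex set lies in the set. -/
private theorem stmt19_avg_mem {S : Set ℝ} (hS : Convex ℝ S) :
    ∀ L : List ℝ, L ≠ [] → (∀ a ∈ L, a ∈ S) → L.sum / (L.length : ℝ) ∈ S := by
  intro L
  induction L with
  | nil => simp
  | cons a L ih =>
    intro _ hmem
    have haS : a ∈ S := hmem a (by simp)
    by_cases hL : L = []
    · subst hL; simpa using haS
    · have havg : L.sum / (L.length : ℝ) ∈ S :=
        ih hL (fun b hb => hmem b (List.mem_cons_of_mem _ hb))
      have hn : (1:ℝ) ≤ (L.length : ℝ) := by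
        have : 1 ≤ L.length := List.length_pos_iff.2 hL
        exact_mod_cast this
      have hn0 : (L.length : ℝ) ≠ 0 := by linarith
      have hkey := hS haS havg (a := 1/((L.length:ℝ)+1)) (b := (L.length:ℝ)/((L.length:ℝ)+1))
        (by positivity) (by positivity) (by field_simp; ring)
      have : (1/((L.length:ℝ)+1)) • a + ((L.length:ℝ)/((L.length:ℝ)+1)) • (L.sum / (L.length:ℝ))
          = (a :: L).sum / ((a :: L).length : ℝ) := by
        simp only [smul_eq_mul, List.sum_cons, List.length_cons]
        push_cast
        field_simp
        all_goals ring
      rwa [this] at hkey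

/-- Squeeze lemma: if T compares correctly with the affine line at all rational points,
then (c,T) lies on the line through (u,U), (v,V). -/
private theorem stmt19_core (u v U V c T : ℝ) (huv : u < v) (hUV : U < V)
    (hc1 : u ≤ c) (hc2 : c ≤ v)
    (hq : ∀ q : ℚ, 0 ≤ q → (q:ℝ) ≤ 1 →
      ((q:ℝ)*(v-u) + u < c → U + (q:ℝ)*(V-U) < T) ∧
      (c < (q:ℝ)*(v-u) + u → T < U + (q:ℝ)*(V-U)) ∧
      (c = (q:ℝ)*(v-u) + u → T = U + (q:ℝ)*(V-U))) :
    T = U + (c-u)/(v-u) * (V-U) := by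
  have hD : (0:ℝ) < v - u := sub_pos.2 huv
  have hE : (0:ℝ) < V - U := sub_pos.2 hUV
  set lam := (c-u)/(v-u) with hlam
  have hl0 : 0 ≤ lam := div_nonneg (by linarith) hD.le
  have hl1 : lam ≤ 1 := by rw [hlam, div_le_one hD]; linarith
  have hcl : c = lam * (v-u) + u := by rw [hlam]; field_simp; ring
  rcases lt_trichotomy T (U + lam*(V-U)) with h | h | h
  · exfalso
    have hlpos : 0 < lam := by
      rcases hl0.lt_or_eq with h' | h'
      · exact h'
      · exfalso
        have h0 := (hq 0 le_rfl (by norm_num)).2.2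
        have : T = U := by simpa using h0 (by rw [hcl, ← h']; push_cast; ring)
        rw [this, ← h'] at h; simp at h
    set eps := (U + lam*(V-U) - T)/(V-U) with heps
    have hepspos : 0 < eps := div_pos (by linarith) hE
    obtain ⟨q, hq1, hq2⟩ := exists_rat_btwn (show max 0 (lam - eps) < lam from
      max_lt hlpos (by linarith))
    have hq0 : (0:ℚ) ≤ q := by
      have : (0:ℝ) ≤ max 0 (lam - eps) := le_max_left _ _
      exact_mod_cast le_of_lt (lt_of_le_of_lt this hq1)
    have hq1' : (q:ℝ) ≤ 1 := le_of_lt (lt_of_lt_of_le hq2 hl1)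
    have heq : eps * (V-U) = U + lam*(V-U) - T := by rw [heps]; field_simp
    have hlt := (hq q hq0 hq1').1 (by nlinarith)
    have hlt2 : lam - eps < (q:ℝ) := lt_of_le_of_lt (le_max_right _ _) hq1
    nlinarith [mul_lt_mul_of_pos_right (show lam - (q:ℝ) < eps from by linarith) hE]
  · linarith
  · exfalso
    have hllt1 : lam < 1 := by
      rcases hl1.lt_or_eq with h' | h'
      · exact h'
      · exfalso
        have h0 := (hq 1 (by norm_num) (by norm_num)).2.2
        have h2 := h0 (by rw [hcl, h']; push_cast; ring)
        push_cast at h2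
        rw [h'] at h; linarith
    set eps := (T - (U + lam*(V-U)))/(V-U) with heps
    have hepspos : 0 < eps := div_pos (by linarith) hE
    obtain ⟨q, hq1, hq2⟩ := exists_rat_btwn (show lam < min 1 (lam + eps) from
      lt_min hllt1 (by linarith))
    have hq0 : (0:ℚ) ≤ q := by
      have : (0:ℝ) ≤ lam := hl0
      exact_mod_cast le_of_lt (lt_of_le_of_lt this hq1)
    have hq1' : (q:ℝ) ≤ 1 := le_of_lt (lt_of_lt_of_le hq2 (min_le_left _ _))
    have heq : eps * (V-U) = T - (U + lam*(V-U)) := by rw [heps]; field_simp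
    have hlt := (hq q hq0 hq1').2.1 (by nlinarith)
    have hlt2 : (q:ℝ) < lam + eps := lt_of_lt_of_le hq2 (min_le_right _ _)
    nlinarith [mul_lt_mul_of_pos_right (show (q:ℝ) - lam < eps from by linarith) hE]



private theorem stmt19_collin (I : Set ℝ) (f g : ℝ → ℝ)
    (hinj : ∀ p ∈ I, ∀ q ∈ I, f p = f q → p = q)
    (hmono : ∀ p ∈ I, ∀ q ∈ I, f p < f q → g p < g q)
    (hsurj : ∀ p ∈ I, ∀ q ∈ I, ∀ c : ℝ, f p ≤ c → c ≤ f q → ∃ w ∈ I, f w = c)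
    (hrat : ∀ x ∈ I, ∀ y ∈ I, ∀ k n : ℕ, k ≤ n → 1 ≤ n → ∀ w ∈ I,
      f w * n = k * f x + ((n:ℝ) - k) * f y → g w * n = k * g x + ((n:ℝ) - k) * g y)
    (x y z : ℝ) (hx : x ∈ I) (hy : y ∈ I) (hz : z ∈ I) :
    (g z - g x) * (f y - f x) = (f z - f x) * (g y - g x) := by
  have mid : ∀ p ∈ I, ∀ r ∈ I, ∀ m ∈ I, f p < f r → f p ≤ f m → f m ≤ f r →
      (g m - g p) * (f r - f p) = (f m - f p) * (g r - g p) := by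
    intro p hp r hr m hm hpr h1 h2
    have hUV : g p < g r := hmono p hp r hr hpr
    have hfd : f r - f p ≠ 0 := sub_ne_zero.2 (ne_of_gt hpr)
    have key : ∀ w ∈ I, ∀ q : ℚ, 0 ≤ q → (q:ℝ) ≤ 1 →
        f w = (q:ℝ)*(f r - f p) + f p → g w = g p + (q:ℝ)*(g r - g p) := by
      intro w hw q hq0 hq1 hfw
      set n := q.den with hn
      set k := q.num.toNat with hk
      have hn1 : 1 ≤ n := q.pos
      have hn0 : (n:ℝ) ≠ 0 := Nat.cast_ne_zero.2 (by omega)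
      have hknum : (k:ℝ) = ((q.num : ℤ) : ℝ) := by
        have h := Rat.num_nonneg.2 hq0
        rw [hk]
        exact_mod_cast congrArg (Int.cast : ℤ → ℝ) (Int.toNat_of_nonneg h)
      have hqkn : (q:ℝ) = (k:ℝ)/(n:ℝ) := by
        rw [Rat.cast_def, hknum]
      have hkn : k ≤ n := by
        have h2' : (k:ℝ) ≤ (n:ℝ) := by
          rw [hqkn, div_le_one (by positivity)] at hq1
          exact hq1
        exact_mod_cast h2'
      have hfw' : f w * n = k * f r + ((n:ℝ) - k) * f p := by
        rw [hfw, hqkn]; field_simp; ring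
      have hgw := hrat r hr p hp k n hkn hn1 w hw hfw'
      rw [hqkn]
      field_simp
      linear_combination hgw
    have hq : ∀ q : ℚ, 0 ≤ q → (q:ℝ) ≤ 1 →
        ((q:ℝ)*(f r - f p) + f p < f m → g p + (q:ℝ)*(g r - g p) < g m) ∧
        (f m < (q:ℝ)*(f r - f p) + f p → g m < g p + (q:ℝ)*(g r - g p)) ∧
        (f m = (q:ℝ)*(f r - f p) + f p → g m = g p + (q:ℝ)*(g r - g p)) := by
      intro q hq0 hq1
      have hq0' : (0:ℝ) ≤ (q:ℝ) := by exact_mod_cast hq0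
      have hcq1 : f p ≤ (q:ℝ)*(f r - f p) + f p := by nlinarith
      have hcq2 : (q:ℝ)*(f r - f p) + f p ≤ f r := by nlinarith
      refine ⟨?_, ?_, ?_⟩
      · intro hlt
        obtain ⟨w, hw, hfw⟩ := hsurj p hp r hr ((q:ℝ)*(f r - f p) + f p) hcq1 hcq2
        have h1' := key w hw q hq0 hq1 hfw
        have h2' := hmono w hw m hm (by rw [hfw]; exact hlt)
        linarith
      · intro hlt
        obtain ⟨w, hw, hfw⟩ := hsurj p hp r hr ((q:ℝ)*(f r - f p) + f p) hcq1 hcq2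
        have h1' := key w hw q hq0 hq1 hfw
        have h2' := hmono m hm w hw (by rw [hfw]; exact hlt)
        linarith
      · intro heq
        exact key m hm q hq0 hq1 heq
    have hcore := stmt19_core (f p) (f r) (g p) (g r) (f m) (g m) hpr hUV h1 h2 hq
    field_simp at hcore
    linear_combination hcore
  -- equality cases helper
  have heqcase : ∀ p ∈ I, ∀ q ∈ I, f p = f q → g p = g q := by
    intro p hp q hq h
    rw [hinj p hp q hq h]
  rcases lt_trichotomy (f x) (f y) with hxy | hxy | hxy
  · rcases lt_trichotomy (f x) (f z) with hxz | hxz | hxz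
    · rcases lt_trichotomy (f z) (f y) with hzy | hzy | hzy
      · -- fx < fz < fy : mid x y z
        have h := mid x hx y hy z hz hxy hxz.le hzy.le
        linear_combination h
      · -- f z = f y : z = y
        have := heqcase z hz y hy hzy
        rw [hzy, this]; ring
      · -- fx < fy < fz : middle y : mid x z y
        have h := mid x hx z hz y hy (lt_trans hxy hzy) hxy.le hzy.le
        linear_combination -h
    · -- f x = f z
      have := heqcase x hx z hz hxz
      rw [← hxz, ← this]; ring
    · -- fz < fx < fy : middle x : mid z y x
      have h := mid z hz y hy x hx (lt_trans hxz hxy) hxz.le hxy.le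
      linear_combination -h
  · -- f x = f y
    have := heqcase x hx y hy hxy
    rw [← hxy, ← this]; ring
  · rcases lt_trichotomy (f x) (f z) with hxz | hxz | hxz
    · -- fy < fx < fz : middle x : mid y z x
      have h := mid y hy z hz x hx (lt_trans hxy hxz) hxy.le hxz.le
      linear_combination h
    · have := heqcase x hx z hz hxz
      rw [← hxz, ← this]; ring
    · rcases lt_trichotomy (f z) (f y) with hzy | hzy | hzy
      · -- fz < fy < fx : middle y : mid z x y
        have h := mid z hz x hx y hy (lt_trans hzy hxy) hzy.le hxy.le
        linear_combination h
      · have := heqcase z hz y hy hzy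
        rw [hzy, this]; ring
      · -- fy < fz < fx : middle z : mid y x z
        have h := mid y hy x hx z hz hxy hzy.le hxz.le
        linear_combination -h




/-- Let `I ⊆ ℝ` be a nontrivial interval, `f, g : I → ℝ`
continuous and strictly monotonic, and for every `n ≥ 1` let
`f_n, g_n : ℝ → ℝ` be continuous and strictly monotonic.  Then
`f_n((1/n) ∑ f xᵢ) = g_n((1/n) ∑ g xᵢ)` for all `n ≥ 1` and all
`x₁,…,x_n ∈ I` iff there are reals `r ≠ 0` and `s` with `g = r·f + s` on `I`
and `f_n t = g_n (r·t + s)` for every `n ≥ 1` and every `t ∈ f(I)`. -/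
theorem stmt_19 (I : Set ℝ) (hconv : I.OrdConnected)
    (hnontriv : ∃ a b : ℝ, a ∈ I ∧ b ∈ I ∧ a ≠ b)
    (f g : ℝ → ℝ)
    (hf : ContinuousOn f I) (hfm : StrictMonoOn f I ∨ StrictAntiOn f I)
    (hg : ContinuousOn g I) (hgm : StrictMonoOn g I ∨ StrictAntiOn g I)
    (fn gn : ℕ → ℝ → ℝ)
    (hfn : ∀ n : ℕ, 1 ≤ n →
      Continuous (fn n) ∧ (StrictMono (fn n) ∨ StrictAnti (fn n)))
    (hgn : ∀ n : ℕ, 1 ≤ n →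
      Continuous (gn n) ∧ (StrictMono (gn n) ∨ StrictAnti (gn n))) :
    (∀ n : ℕ, 1 ≤ n → ∀ l : List ℝ, l.length = n → (∀ a ∈ l, a ∈ I) →
        fn n ((l.map f).sum / (n : ℝ)) = gn n ((l.map g).sum / (n : ℝ)))
    ↔
    (∃ r s : ℝ, r ≠ 0 ∧ (∀ x ∈ I, g x = r * f x + s) ∧
      ∀ n : ℕ, 1 ≤ n → ∀ t ∈ f '' I, fn n t = gn n (r * t + s)) := by
  -- common facts
  have himgOrd : (f '' I).OrdConnected :=
    ((hconv.isPreconnected).image f hf).ordConnected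
  have hfinj : ∀ p ∈ I, ∀ q ∈ I, f p = f q → p = q := by
    rcases hfm with h | h
    · exact fun p hp q hq hpq => h.injOn hp hq hpq
    · exact fun p hp q hq hpq => h.injOn hp hq hpq
  have hginj : ∀ p ∈ I, ∀ q ∈ I, g p = g q → p = q := by
    rcases hgm with h | h
    · exact fun p hp q hq hpq => h.injOn hp hq hpq
    · exact fun p hp q hq hpq => h.injOn hp hq hpq
  constructor
  · -- forward
    intro H
    obtain ⟨a, b, ha, hb, hab⟩ := hnontriv
    -- single point evaluation
    have hpoint : ∀ n : ℕ, 1 ≤ n → ∀ w ∈ I, fn n (f w) = gn n (g w) := by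
      intro n hn w hw
      have hn0 : (n:ℝ) ≠ 0 := Nat.cast_ne_zero.2 (by omega)
      have h := H n hn (List.replicate n w) (by simp) (by
        intro a haa; rw [List.eq_of_mem_replicate haa]; exact hw)
      simpa [List.map_replicate, List.sum_replicate, nsmul_eq_mul,
        mul_div_assoc, mul_div_cancel_left₀ _ hn0] using h
    -- rational combinations
    have hrat : ∀ x ∈ I, ∀ y ∈ I, ∀ k n : ℕ, k ≤ n → 1 ≤ n → ∀ w ∈ I,
        f w * n = k * f x + ((n:ℝ) - k) * f y →
        g w * n = k * g x + ((n:ℝ) - k) * g y := by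
      intro x hx y hy k n hkn hn w hw hfw
      have hn0 : (n:ℝ) ≠ 0 := Nat.cast_ne_zero.2 (by omega)
      set l := List.replicate k x ++ List.replicate (n-k) y with hl
      have hlen : l.length = n := by simp [hl]; omega
      have hmeml : ∀ a ∈ l, a ∈ I := by
        intro a haa
        rcases List.mem_append.1 haa with h | h
        · rw [List.eq_of_mem_replicate h]; exact hx
        · rw [List.eq_of_mem_replicate h]; exact hy
      have hsum : ∀ h : ℝ → ℝ, (l.map h).sum = k * h x + ((n:ℝ) - k) * h y := by
        intro h
        rw [hl, List.map_append, List.map_replicate, List.map_replicate, List.sum_append,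
          List.sum_replicate, List.sum_replicate, nsmul_eq_mul, nsmul_eq_mul,
          Nat.cast_sub hkn]
      have hsumf := hsum f
      have hsumg := hsum g
      have h := H n hn l hlen hmeml
      rw [hsumf, hsumg] at h
      have havg : (k * f x + ((n:ℝ) - k) * f y) / n = f w := by
        rw [← hfw]; field_simp
      rw [havg, hpoint n hn w hw] at h
      have hgninj : Function.Injective (gn n) := by
        rcases (hgn n hn).2 with h' | h'
        · exact h'.injective
        · exact h'.injective
      have := hgninj h
      rw [eq_div_iff hn0] at this
      linarith [this]
    -- surjectivity onto intermediate values
    have hsurj : ∀ p ∈ I, ∀ q ∈ I, ∀ c : ℝ, f p ≤ c → c ≤ f q → ∃ w ∈ I, f w = c := by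
      intro p hp q hq c h1 h2
      have : c ∈ f '' I := himgOrd.out ⟨p, hp, rfl⟩ ⟨q, hq, rfl⟩ ⟨h1, h2⟩
      obtain ⟨w, hw, hfw⟩ := this
      exact ⟨w, hw, hfw⟩
    -- monotone transfer
    have hdir : (∀ p ∈ I, ∀ q ∈ I, f p < f q → g p < g q) ∨
        (∀ p ∈ I, ∀ q ∈ I, f p < f q → g q < g p) := by
      have horder : ∀ p ∈ I, ∀ q ∈ I, f p < f q →
          (StrictMonoOn f I → p < q) ∧ (StrictAntiOn f I → q < p) := by
        intro p hp q hq hpq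
        constructor
        · intro hm
          rcases lt_trichotomy p q with h | h | h
          · exact h
          · exfalso; rw [h] at hpq; exact lt_irrefl _ hpq
          · exact absurd (hm hq hp h) (by linarith)
        · intro hm
          rcases lt_trichotomy q p with h | h | h
          · exact h
          · exfalso; rw [h] at hpq; exact lt_irrefl _ hpq
          · exact absurd (hm hp hq h) (by linarith)
      rcases hfm with hfmo | hfmo <;> rcases hgm with hgmo | hgmo
      · left; intro p hp q hq hpq; exact hgmo hp hq ((horder p hp q hq hpq).1 hfmo)
      · right; intro p hp q hq hpq; exact hgmo hp hq ((horder p hp q hq hpq).1 hfmo)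
      · right; intro p hp q hq hpq; exact hgmo hq hp ((horder p hp q hq hpq).2 hfmo)
      · left; intro p hp q hq hpq; exact hgmo hq hp ((horder p hp q hq hpq).2 hfmo)
    -- collinearity of all points
    have hdet : ∀ x ∈ I, (g x - g a) * (f b - f a) = (f x - f a) * (g b - g a) := by
      rcases hdir with hmono | hanti
      · intro x hx
        exact stmt19_collin I f g hfinj hmono hsurj hrat a b x ha hb hx
      · intro x hx
        have hratneg : ∀ x ∈ I, ∀ y ∈ I, ∀ k n : ℕ, k ≤ n → 1 ≤ n → ∀ w ∈ I,
            f w * n = k * f x + ((n:ℝ) - k) * f y →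
            (-g w) * n = k * (-g x) + ((n:ℝ) - k) * (-g y) := by
          intro x' hx' y' hy' k n hkn hn w hw hfw
          have := hrat x' hx' y' hy' k n hkn hn w hw hfw
          linarith [this]
        have hmononeg : ∀ p ∈ I, ∀ q ∈ I, f p < f q → (-g) p < (-g) q := by
          intro p hp q hq hpq
          simpa using neg_lt_neg (hanti p hp q hq hpq)
        have h := stmt19_collin I f (fun t => -g t) hfinj
          (by intro p hp q hq hpq; simpa using hmononeg p hp q hq hpq)
          hsurj hratneg a b x ha hb hx
        linarith [h, sq_nonneg (1:ℝ)]
      -- (may need linear_combination; fix later)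
    have hfab : f a ≠ f b := fun h => hab (hfinj a ha b hb h)
    have hgab : g a ≠ g b := fun h => hab (hginj a ha b hb h)
    have hfba : f b - f a ≠ 0 := sub_ne_zero.2 (Ne.symm hfab)
    refine ⟨(g b - g a)/(f b - f a), g a - (g b - g a)/(f b - f a) * f a,
      div_ne_zero (sub_ne_zero.2 (Ne.symm hgab)) hfba, ?_, ?_⟩
    · intro x hx
      have h := hdet x hx
      field_simp
      linear_combination h
    · intro n hn t ht
      obtain ⟨x, hx, rfl⟩ := ht
      have h := hdet x hx
      have hgx : g x = (g b - g a)/(f b - f a) * f x + (g a - (g b - g a)/(f b - f a) * f a) := by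
        field_simp
        linear_combination h
      rw [hpoint n hn x hx, hgx]
  · -- backward
    rintro ⟨r, s, hr, hgs, hfns⟩ n hn l hlen hmeml
    have hn0 : (n:ℝ) ≠ 0 := Nat.cast_ne_zero.2 (by omega)
    have hconvf : Convex ℝ (f '' I) := convex_iff_ordConnected.2 himgOrd
    have hlne : l ≠ [] := by
      intro h; rw [h] at hlen; simp at hlen; omega
    have hmapne : l.map f ≠ [] := by
      simpa using hlne
    have hmemmap : ∀ c ∈ l.map f, c ∈ f '' I := by
      intro c hc
      obtain ⟨a, haa, rfl⟩ := List.mem_map.1 hc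
      exact ⟨a, hmeml a haa, rfl⟩
    have hlenmap : ((l.map f).length : ℝ) = (n : ℝ) := by
      simp [hlen]
    have havgmem : (l.map f).sum / (n:ℝ) ∈ f '' I := by
      rw [← hlenmap]
      exact stmt19_avg_mem hconvf (l.map f) hmapne hmemmap
    have hsumg : (l.map g).sum = r * (l.map f).sum + (l.length : ℝ) * s := by
      clear hlen hlne hmapne hmemmap hlenmap havgmem
      induction l with
      | nil => simp
      | cons a L ih =>
        have haI : a ∈ I := hmeml a (by simp)
        have := ih (fun b hb => hmeml b (List.mem_cons_of_mem _ hb))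
        simp only [List.map_cons, List.sum_cons, List.length_cons]
        rw [this, hgs a haI]
        push_cast
        ring
    have hkey := hfns n hn _ havgmem
    rw [hkey]
    congr 1
    rw [hsumg, hlen]
    field_simp
end
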